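/- Let π be a guessing order and a a position with a + 2 ≤ B ≤ n such that the guesses at positions a and a+1 form an inversion, i.e., p(π(a+1))·k(π(a)) ≥ p(π(a))·k(π(a+1)). Let π' be obtained from π by transposing positions a and a+1. Then U(π', B) ≥ U(π, B). -/

import Mathlib

open Finset

/-- Success probability λ(π,B): sum of probabilities of the first B guesses. -/
noncomputable def lam (n : ℕ) (p : Fin n → ℝ) (π : Equiv.Perm (Fin n)) (B : ℕ) : ℝ :=
  ∑ t : Fin n, if t.val < B then p (π t) else 0

/-- Attacker utility U(π,B) = v·λ(π,B) − Σ_{t<B} k(π(t))·(1 − λ(π,t)). -/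
noncomputable def U (n : ℕ) (p k : Fin n → ℝ) (v : ℝ) (π : Equiv.Perm (Fin n)) (B : ℕ) : ℝ :=
  v * lam n p π B - ∑ t : Fin n, if t.val < B then k (π t) * (1 - lam n p π t.val) else 0

lemma lam_succ (n : ℕ) (p : Fin n → ℝ) (π : Equiv.Perm (Fin n)) (t : Fin n) :
    lam n p π (t.val + 1) = lam n p π t.val + p (π t) := by
  have h : lam n p π (t.val + 1) - lam n p π t.val =
      ∑ s : Fin n, ((if s.val < t.val + 1 then p (π s) else 0)
        - (if s.val < t.val then p (π s) else 0)) := by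
    unfold lam; rw [← Finset.sum_sub_distrib]
  have h2 : ∑ s : Fin n, ((if s.val < t.val + 1 then p (π s) else 0)
        - (if s.val < t.val then p (π s) else 0))
      = ∑ s ∈ ({t} : Finset (Fin n)), ((if s.val < t.val + 1 then p (π s) else 0)
        - (if s.val < t.val then p (π s) else 0)) := by
    symm
    apply Finset.sum_subset (Finset.subset_univ _)
    intro s _ hs
    simp only [Finset.mem_singleton] at hs
    have : s.val ≠ t.val := fun h => hs (Fin.ext h)
    split_ifs with h1 h2 <;> first | ring1 | (exfalso; omega)
  rw [h2, Finset.sum_singleton] at h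
  simp at h
  linarith

theorem stmt_3 (n : ℕ) (p k : Fin n → ℝ) (v : ℝ)
    (hp : ∀ i, 0 ≤ p i) (hpsum : ∑ i, p i ≤ 1) (hk : ∀ i, 0 < k i) (hv : 0 ≤ v)
    (π : Equiv.Perm (Fin n)) (B : ℕ) (hB : B ≤ n)
    (a : Fin n) (ha : a.val + 2 ≤ B)
    (hinv : p (π ⟨a.val + 1, by omega⟩) * k (π a) ≥ p (π a) * k (π ⟨a.val + 1, by omega⟩)) :
    U n p k v (π * Equiv.swap a ⟨a.val + 1, by omega⟩) B ≥ U n p k v π B := by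
  set a' : Fin n := ⟨a.val + 1, by omega⟩ with ha'def
  set σ : Equiv.Perm (Fin n) := Equiv.swap a a' with hσdef
  have ha'v : a'.val = a.val + 1 := rfl
  have hne : a ≠ a' := by
    intro h
    have := congrArg Fin.val h
    omega
  have hσa : σ a = a' := Equiv.swap_apply_left a a'
  have hσa' : σ a' = a := Equiv.swap_apply_right a a'
  have hσs : ∀ s : Fin n, s ≠ a → s ≠ a' → σ s = s :=
    fun s h1 h2 => Equiv.swap_apply_of_ne_of_ne h1 h2
  have happ : ∀ s : Fin n, (π * σ) s = π (σ s) := fun s => rfl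
  -- lam difference
  have hlam : ∀ t : ℕ, lam n p (π * σ) t =
      lam n p π t + ((if a.val < t then p (π a') - p (π a) else 0)
        + (if a.val + 1 < t then p (π a) - p (π a') else 0)) := by
    intro t
    have key : lam n p (π * σ) t - lam n p π t =
        ∑ s : Fin n, ((if s.val < t then p (π (σ s)) else 0)
          - (if s.val < t then p (π s) else 0)) := by
      unfold lam
      rw [← Finset.sum_sub_distrib]
      rfl
    have key2 : ∑ s : Fin n, ((if s.val < t then p (π (σ s)) else 0)
          - (if s.val < t then p (π s) else 0))
        = ∑ s ∈ ({a, a'} : Finset (Fin n)), ((if s.val < t then p (π (σ s)) else 0)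
          - (if s.val < t then p (π s) else 0)) := by
      symm
      apply Finset.sum_subset (Finset.subset_univ _)
      intro s _ hs
      simp only [Finset.mem_insert, Finset.mem_singleton, not_or] at hs
      rw [hσs s hs.1 hs.2]
      ring
    rw [key2, Finset.sum_pair hne, hσa, hσa'] at key
    rw [ha'v] at key
    have : lam n p (π * σ) t - lam n p π t =
        ((if a.val < t then p (π a') - p (π a) else 0)
          + (if a.val + 1 < t then p (π a) - p (π a') else 0)) := by
      rw [key]
      split_ifs <;> ring
    linarith
  have hBa : a.val < B := by omega
  have hBa' : a.val + 1 < B := by omega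
  -- lam at B unchanged
  have hlamB : lam n p (π * σ) B = lam n p π B := by
    rw [hlam B, if_pos hBa, if_pos hBa']
    ring
  -- cost sum difference
  have hS : (∑ t : Fin n, if t.val < B then k ((π * σ) t) * (1 - lam n p (π * σ) t.val) else 0)
      - (∑ t : Fin n, if t.val < B then k (π t) * (1 - lam n p π t.val) else 0)
      = p (π a) * k (π a') - p (π a') * k (π a) := by
    rw [← Finset.sum_sub_distrib]
    have key2 : ∑ t : Fin n, ((if t.val < B then k ((π * σ) t) * (1 - lam n p (π * σ) t.val) else 0)
          - (if t.val < B then k (π t) * (1 - lam n p π t.val) else 0))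
        = ∑ t ∈ ({a, a'} : Finset (Fin n)),
            ((if t.val < B then k ((π * σ) t) * (1 - lam n p (π * σ) t.val) else 0)
          - (if t.val < B then k (π t) * (1 - lam n p π t.val) else 0)) := by
      symm
      apply Finset.sum_subset (Finset.subset_univ _)
      intro s _ hs
      simp only [Finset.mem_insert, Finset.mem_singleton, not_or] at hs
      have hσss : (π * σ) s = π s := by rw [happ, hσs s hs.1 hs.2]
      have hsv : s.val ≠ a.val + 1 := by
        intro h
        exact hs.2 (Fin.ext h)
      have hlams : lam n p (π * σ) s.val = lam n p π s.val := by
        rw [hlam s.val]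
        split_ifs with h1 h2 <;> first | ring1 | (exfalso; omega)
      rw [hσss, hlams]
      ring
    rw [key2, Finset.sum_pair hne]
    have e1 : (π * σ) a = π a' := by rw [happ, hσa]
    have e2 : (π * σ) a' = π a := by rw [happ, hσa']
    have e3 : lam n p (π * σ) a.val = lam n p π a.val := by
      rw [hlam a.val]
      simp
    have e4 : lam n p (π * σ) a'.val = lam n p π a.val + p (π a') := by
      rw [ha'v, hlam (a.val + 1)]
      have := lam_succ n p π a
      rw [this]
      simp
    have e5 : lam n p π a'.val = lam n p π a.val + p (π a) := by
      rw [ha'v]; exact lam_succ n p π a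
    rw [ha'v] at e4 e5
    simp only [e1, e2, e3, e4, e5, ha'v, if_pos hBa, if_pos hBa']
    ring
  unfold U
  rw [hlamB]
  have hinv' : p (π a') * k (π a) ≥ p (π a) * k (π a') := hinv
  linarith [hS, hinv']
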